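/- Let m ≥ 2 be an integer and let V be a k-subspace of k[β] with (β^m) ⊆ V of the form V = k·p₁ + V₂ + (β^m), where p₁ is a nonzero polynomial of order ν₁ (i.e. β^{ν₁} divides p₁ but β^{ν₁+1} does not), V₂ is a k-subspace every nonzero element of which has order at least ν₂, and ν₁ < ν₂. Then dim_k W(V,m) ≥ 2m − max(1, ν₁, m − ν₂ + 1) − max(1, m − ν₁). In particular, if W(V,m) = 0 then ν₁ = 0 and ν₂ = 1. -/

import Mathlib

open Polynomial Matrix

noncomputable section

/-- `Algebra` structure on the quotient of a `k`-algebra by a ring congruence. -/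
instance RingConQuotient.algebra (k R : Type*) [CommSemiring k] [Ring R] [Algebra k R]
    (c : RingCon R) : Algebra k c.Quotient where
  algebraMap := (RingCon.mk' c).comp (algebraMap k R)
  commutes' := by
    intro r x
    induction x using Quotient.ind
    exact congrArg _ (Algebra.commutes r _)
  smul_def' := by
    intro r x
    induction x using Quotient.ind
    exact congrArg _ (Algebra.smul_def r _)

variable (k : Type*) [Field k]

/-- `D` is a `k`-derivation (as a linear endomorphism of a `k`-algebra). -/
def IsDer {R : Type*} [Ring R] [Algebra k R] (D : R →ₗ[k] R) : Prop :=
  ∀ x y : R, D (x * y) = D x * y + x * D y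

/-- `D` is an inner derivation. -/
def IsInner {R : Type*} [Ring R] [Algebra k R] (D : R →ₗ[k] R) : Prop :=
  ∃ a : R, ∀ x : R, D x = a * x - x * a

/-- The ideal `(β^j)` of `k[β]`, as a `k`-submodule. -/
def Bsub (j : ℕ) : Submodule k (Polynomial k) where
  carrier := {p | X ^ j ∣ p}
  zero_mem' := dvd_zero _
  add_mem' := fun h1 h2 => dvd_add h1 h2
  smul_mem' := fun c p hp => by
    simpa [Polynomial.smul_eq_C_mul] using Dvd.dvd.mul_left hp (C c)

lemma mem_Bsub {k : Type*} [Field k] {j : ℕ} {p : Polynomial k} :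
    p ∈ Bsub k j ↔ X ^ j ∣ p := Iff.rfl

/-- The algebra `T`: upper triangular 3×3 matrices over `k[β]` whose
`(1,1)` and `(3,3)` entries are constants. -/
def Tsub : Subalgebra k (Matrix (Fin 3) (Fin 3) (Polynomial k)) where
  carrier := {M | (∀ i j : Fin 3, j < i → M i j = 0) ∧
      (∃ x : k, M 0 0 = C x) ∧ (∃ z : k, M 2 2 = C z)}
  zero_mem' := ⟨fun _ _ _ => rfl, ⟨0, by simp⟩, ⟨0, by simp⟩⟩
  one_mem' := ⟨fun i j h => Matrix.one_apply_ne h.ne', ⟨1, by simp⟩, ⟨1, by simp⟩⟩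
  add_mem' := by
    rintro a b ⟨hal, ⟨x, hax⟩, ⟨z, haz⟩⟩ ⟨hbl, ⟨y, hby⟩, ⟨w, hbw⟩⟩
    refine ⟨fun i j h => by simp [hal i j h, hbl i j h], ⟨x + y, by simp [hax, hby]⟩,
      ⟨z + w, by simp [haz, hbw]⟩⟩
  mul_mem' := by
    rintro a b ⟨hal, ⟨x, hax⟩, ⟨z, haz⟩⟩ ⟨hbl, ⟨y, hby⟩, ⟨w, hbw⟩⟩
    refine ⟨fun i j h => ?_, ⟨x * y, ?_⟩, ⟨z * w, ?_⟩⟩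
    · rw [Matrix.mul_apply]
      apply Finset.sum_eq_zero
      intro l _
      rcases lt_or_ge l i with hl | hl
      · rw [hal i l hl, zero_mul]
      · rw [hbl l j (lt_of_lt_of_le h hl), mul_zero]
    · rw [Matrix.mul_apply, Fin.sum_univ_three,
        hbl 1 0 (by decide), hbl 2 0 (by decide), hax, hby]
      simp
    · rw [Matrix.mul_apply, Fin.sum_univ_three,
        hal 2 0 (by decide), hal 2 1 (by decide), haz, hbw]
      simp
  algebraMap_mem' := by
    intro r
    refine ⟨fun i j h => ?_, ⟨r, ?_⟩, ⟨r, ?_⟩⟩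
    · rw [Matrix.algebraMap_matrix_apply, if_neg h.ne']
    · rw [Matrix.algebraMap_matrix_apply, if_pos rfl]; rfl
    · rw [Matrix.algebraMap_matrix_apply, if_pos rfl]; rfl

/-- The matrix `p·E₁₂` as an element of `T`. -/
def tE12 (p : Polynomial k) : Tsub k :=
  ⟨Matrix.single 0 1 p, by
    refine ⟨fun i j h => ?_, ⟨0, ?_⟩, ⟨0, ?_⟩⟩
    · fin_cases i <;> fin_cases j <;> simp_all [Matrix.single, Matrix.of_apply]
    · simp [Matrix.single, Matrix.of_apply]
    · simp [Matrix.single, Matrix.of_apply]⟩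

/-- The matrix `p·E₂₂` as an element of `T`. -/
def tE22 (p : Polynomial k) : Tsub k :=
  ⟨Matrix.single 1 1 p, by
    refine ⟨fun i j h => ?_, ⟨0, ?_⟩, ⟨0, ?_⟩⟩
    · fin_cases i <;> fin_cases j <;> simp_all [Matrix.single, Matrix.of_apply]
    · simp [Matrix.single, Matrix.of_apply]
    · simp [Matrix.single, Matrix.of_apply]⟩

/-- The matrix `p·E₂₃` as an element of `T`. -/
def tE23 (p : Polynomial k) : Tsub k :=
  ⟨Matrix.single 1 2 p, by
    refine ⟨fun i j h => ?_, ⟨0, ?_⟩, ⟨0, ?_⟩⟩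
    · fin_cases i <;> fin_cases j <;> simp_all [Matrix.single, Matrix.of_apply]
    · simp [Matrix.single, Matrix.of_apply]
    · simp [Matrix.single, Matrix.of_apply]⟩

/-- The matrix `p·E₁₃` as an element of `T`. -/
def tE13 (p : Polynomial k) : Tsub k :=
  ⟨Matrix.single 0 2 p, by
    refine ⟨fun i j h => ?_, ⟨0, ?_⟩, ⟨0, ?_⟩⟩
    · fin_cases i <;> fin_cases j <;> simp_all [Matrix.single, Matrix.of_apply]
    · simp [Matrix.single, Matrix.of_apply]
    · simp [Matrix.single, Matrix.of_apply]⟩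

/-- The idempotent `E₁₁` as an element of `T`. -/
def tE11 : Tsub k :=
  ⟨Matrix.single 0 0 1, by
    refine ⟨fun i j h => ?_, ⟨1, ?_⟩, ⟨0, ?_⟩⟩
    · fin_cases i <;> fin_cases j <;> simp_all [Matrix.single, Matrix.of_apply]
    · simp [Matrix.single, Matrix.of_apply]
    · simp [Matrix.single, Matrix.of_apply]⟩

/-- The idempotent `E₂₂` as an element of `T`. -/
def tE22one : Tsub k := tE22 k 1

/-- The idempotent `E₃₃` as an element of `T`. -/
def tE33 : Tsub k :=
  ⟨Matrix.single 2 2 1, by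
    refine ⟨fun i j h => ?_, ⟨0, ?_⟩, ⟨1, ?_⟩⟩
    · fin_cases i <;> fin_cases j <;> simp_all [Matrix.single, Matrix.of_apply]
    · simp [Matrix.single, Matrix.of_apply]
    · simp [Matrix.single, Matrix.of_apply]⟩

/-- The underlying set of the ideal `I(n; n', n''; V)` of `T`. -/
def Icar (n n' n'' : ℕ) (V : Submodule k (Polynomial k)) : Set (Tsub k) :=
  {M | (M : Matrix (Fin 3) (Fin 3) (Polynomial k)) 0 0 = 0 ∧
       (M : Matrix (Fin 3) (Fin 3) (Polynomial k)) 2 2 = 0 ∧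
       X ^ n' ∣ (M : Matrix (Fin 3) (Fin 3) (Polynomial k)) 0 1 ∧
       (M : Matrix (Fin 3) (Fin 3) (Polynomial k)) 0 2 ∈ V ∧
       X ^ n ∣ (M : Matrix (Fin 3) (Fin 3) (Polynomial k)) 1 1 ∧
       X ^ n'' ∣ (M : Matrix (Fin 3) (Fin 3) (Polynomial k)) 1 2}

variable {k}

lemma Tsub_lower {a : Tsub k} :
    ∀ i j : Fin 3, j < i → (a : Matrix (Fin 3) (Fin 3) (Polynomial k)) i j = 0 := a.2.1

lemma Tsub_00 (a : Tsub k) : ∃ x : k, (a : Matrix (Fin 3) (Fin 3) (Polynomial k)) 0 0 = C x :=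
  a.2.2.1

lemma Tsub_22 (a : Tsub k) : ∃ z : k, (a : Matrix (Fin 3) (Fin 3) (Polynomial k)) 2 2 = C z :=
  a.2.2.2

variable (k)

/-- The two-sided ideal `I(n; n', n''; V)` of `T`. -/
def Itsi (n n' n'' : ℕ) (V : Submodule k (Polynomial k)) (hn' : n' ≤ n) (hn'' : n'' ≤ n)
    (hV : ∀ p : Polynomial k, X ^ min n' n'' ∣ p → p ∈ V) : TwoSidedIdeal (Tsub k) :=
  TwoSidedIdeal.mk' (Icar k n n' n'' V)
    (by
      refine ⟨rfl, rfl, ?_, ?_, ?_, ?_⟩ <;> simp)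
    (by
      rintro a b ⟨h1, h2, h3, h4, h5, h6⟩ ⟨g1, g2, g3, g4, g5, g6⟩
      refine ⟨?_, ?_, ?_, ?_, ?_, ?_⟩ <;>
        simp only [AddMemClass.coe_add, Matrix.add_apply]
      · rw [h1, g1, add_zero]
      · rw [h2, g2, add_zero]
      · exact dvd_add h3 g3
      · exact V.add_mem h4 g4
      · exact dvd_add h5 g5
      · exact dvd_add h6 g6)
    (by
      rintro a ⟨h1, h2, h3, h4, h5, h6⟩
      refine ⟨?_, ?_, ?_, ?_, ?_, ?_⟩ <;>
        simp only [NegMemClass.coe_neg, Matrix.neg_apply]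
      · rw [h1, neg_zero]
      · rw [h2, neg_zero]
      · exact dvd_neg.mpr h3
      · exact V.neg_mem h4
      · exact dvd_neg.mpr h5
      · exact dvd_neg.mpr h6)
    (by
      rintro t a ⟨h1, h2, h3, h4, h5, h6⟩
      have hta : ((t * a : Tsub k) : Matrix (Fin 3) (Fin 3) (Polynomial k)) =
          (t : Matrix (Fin 3) (Fin 3) (Polynomial k)) * a := rfl
      obtain ⟨x, hx⟩ := Tsub_00 t
      refine ⟨?_, ?_, ?_, ?_, ?_, ?_⟩ <;>
        rw [hta, Matrix.mul_apply, Fin.sum_univ_three]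
      · rw [h1, Tsub_lower (a := a) 1 0 (by decide), Tsub_lower (a := a) 2 0 (by decide)]
        simp
      · rw [h2, Tsub_lower (a := t) 2 0 (by decide), Tsub_lower (a := t) 2 1 (by decide)]
        simp
      · rw [Tsub_lower (a := a) 2 1 (by decide)]
        simp only [mul_zero, add_zero]
        exact dvd_add (Dvd.dvd.mul_left h3 _)
          (Dvd.dvd.mul_left ((pow_dvd_pow X hn').trans h5) _)
      · rw [h2]
        simp only [mul_zero, add_zero]
        refine V.add_mem ?_
          (hV _ (Dvd.dvd.mul_left ((pow_dvd_pow X (min_le_right n' n'')).trans h6) _))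
        rw [hx]
        have : C x * (a : Matrix (Fin 3) (Fin 3) (Polynomial k)) 0 2 =
            x • (a : Matrix (Fin 3) (Fin 3) (Polynomial k)) 0 2 := by
          rw [Polynomial.smul_eq_C_mul]
        rw [this]
        exact V.smul_mem _ h4
      · rw [Tsub_lower (a := t) 1 0 (by decide), Tsub_lower (a := a) 2 1 (by decide)]
        simp only [zero_mul, mul_zero, zero_add, add_zero]
        exact Dvd.dvd.mul_left h5 _
      · rw [Tsub_lower (a := t) 1 0 (by decide), h2]
        simp only [zero_mul, mul_zero, zero_add, add_zero]
        exact Dvd.dvd.mul_left h6 _)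
    (by
      rintro a t ⟨h1, h2, h3, h4, h5, h6⟩
      have hta : ((a * t : Tsub k) : Matrix (Fin 3) (Fin 3) (Polynomial k)) =
          (a : Matrix (Fin 3) (Fin 3) (Polynomial k)) * t := rfl
      obtain ⟨z, hz⟩ := Tsub_22 t
      refine ⟨?_, ?_, ?_, ?_, ?_, ?_⟩ <;>
        rw [hta, Matrix.mul_apply, Fin.sum_univ_three]
      · rw [h1, Tsub_lower (a := t) 1 0 (by decide), Tsub_lower (a := t) 2 0 (by decide)]
        simp
      · rw [h2, Tsub_lower (a := a) 2 0 (by decide), Tsub_lower (a := a) 2 1 (by decide)]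
        simp
      · rw [h1, Tsub_lower (a := t) 2 1 (by decide)]
        simp only [zero_mul, mul_zero, zero_add, add_zero]
        exact Dvd.dvd.mul_right h3 _
      · rw [h1]
        simp only [zero_mul, zero_add]
        refine V.add_mem
          (hV _ (Dvd.dvd.mul_right ((pow_dvd_pow X (min_le_left n' n'')).trans h3) _)) ?_
        rw [hz]
        have : (a : Matrix (Fin 3) (Fin 3) (Polynomial k)) 0 2 * C z =
            z • (a : Matrix (Fin 3) (Fin 3) (Polynomial k)) 0 2 := by
          rw [Polynomial.smul_eq_C_mul, mul_comm]
        rw [this]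
        exact V.smul_mem _ h4
      · rw [Tsub_lower (a := a) 1 0 (by decide), Tsub_lower (a := t) 2 1 (by decide)]
        simp only [zero_mul, mul_zero, zero_add, add_zero]
        exact Dvd.dvd.mul_right h5 _
      · rw [Tsub_lower (a := a) 1 0 (by decide)]
        simp only [zero_mul, zero_add]
        exact dvd_add (Dvd.dvd.mul_right ((pow_dvd_pow X hn'').trans h5) _)
          (Dvd.dvd.mul_right h6 _))

/-- The quotient algebra `A = T / I(n; n', n''; V)`. -/
def Aquot (n n' n'' : ℕ) (V : Submodule k (Polynomial k)) (hn' : n' ≤ n) (hn'' : n'' ≤ n)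
    (hV : ∀ p : Polynomial k, X ^ min n' n'' ∣ p → p ∈ V) : Type _ :=
  (Itsi k n n' n'' V hn' hn'' hV).ringCon.Quotient

instance (n n' n'' : ℕ) (V : Submodule k (Polynomial k)) (hn' : n' ≤ n) (hn'' : n'' ≤ n)
    (hV : ∀ p : Polynomial k, X ^ min n' n'' ∣ p → p ∈ V) :
    Ring (Aquot k n n' n'' V hn' hn'' hV) :=
  inferInstanceAs (Ring (Itsi k n n' n'' V hn' hn'' hV).ringCon.Quotient)

instance (n n' n'' : ℕ) (V : Submodule k (Polynomial k)) (hn' : n' ≤ n) (hn'' : n'' ≤ n)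
    (hV : ∀ p : Polynomial k, X ^ min n' n'' ∣ p → p ∈ V) :
    Algebra k (Aquot k n n' n'' V hn' hn'' hV) :=
  inferInstanceAs (Algebra k (Itsi k n n' n'' V hn' hn'' hV).ringCon.Quotient)

/-- The quotient map `T → A`. -/
def Amk (n n' n'' : ℕ) (V : Submodule k (Polynomial k)) (hn' : n' ≤ n) (hn'' : n'' ≤ n)
    (hV : ∀ p : Polynomial k, X ^ min n' n'' ∣ p → p ∈ V) :
    Tsub k →+* Aquot k n n' n'' V hn' hn'' hV :=
  RingCon.mk' (Itsi k n n' n'' V hn' hn'' hV).ringCon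


/-- The space `W(V,m)` of first-order differential operators `A + B·∂/∂β` with
`A(0) = B(0) = 0`, `deg A, deg B ≤ m − 1`, mapping `V` into itself. -/
def Wsub (m : ℕ) (V : Submodule k (Polynomial k)) :
    Submodule k (Polynomial k × Polynomial k) where
  carrier := {P | P.1.coeff 0 = 0 ∧ P.2.coeff 0 = 0 ∧
      P.1.degree ≤ ((m - 1 : ℕ) : WithBot ℕ) ∧ P.2.degree ≤ ((m - 1 : ℕ) : WithBot ℕ) ∧
      ∀ v ∈ V, P.1 * v + P.2 * derivative v ∈ V}
  zero_mem' := by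
    refine ⟨by simp, by simp, by simp, by simp, fun v hv => by simpa using V.zero_mem⟩
  add_mem' := by
    rintro P Q ⟨h1, h2, h3, h4, h5⟩ ⟨g1, g2, g3, g4, g5⟩
    refine ⟨by simp [h1, g1], by simp [h2, g2],
      le_trans (Polynomial.degree_add_le _ _) (max_le h3 g3),
      le_trans (Polynomial.degree_add_le _ _) (max_le h4 g4), fun v hv => ?_⟩
    have : (P + Q).1 * v + (P + Q).2 * derivative v =
        (P.1 * v + P.2 * derivative v) + (Q.1 * v + Q.2 * derivative v) := by
      simp [add_mul]; ring
    rw [this]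
    exact V.add_mem (h5 v hv) (g5 v hv)
  smul_mem' := by
    rintro c P ⟨h1, h2, h3, h4, h5⟩
    refine ⟨by simp [h1], by simp [h2],
      le_trans (Polynomial.degree_smul_le _ _) h3,
      le_trans (Polynomial.degree_smul_le _ _) h4, fun v hv => ?_⟩
    have : (c • P).1 * v + (c • P).2 * derivative v =
        c • (P.1 * v + P.2 * derivative v) := by
      simp [smul_add, smul_mul_assoc]
    rw [this]
    exact V.smul_mem _ (h5 v hv)


lemma mem_Wsub {K : Type*} [Field K] {m : ℕ} {V : Submodule K (Polynomial K)}
    {P : Polynomial K × Polynomial K} :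
    P ∈ Wsub K m V ↔ P.1.coeff 0 = 0 ∧ P.2.coeff 0 = 0 ∧
      P.1.degree ≤ ((m - 1 : ℕ) : WithBot ℕ) ∧ P.2.degree ≤ ((m - 1 : ℕ) : WithBot ℕ) ∧
      ∀ v ∈ V, P.1 * v + P.2 * derivative v ∈ V := Iff.rfl

private lemma aux_inv {K : Type*} [Field K] (u : Polynomial K) (hu : u.coeff 0 ≠ 0) (n : ℕ) :
    ∃ q : Polynomial K, X ^ n ∣ (u * q - 1) := by
  induction n with
  | zero => exact ⟨0, by simp⟩
  | succ n ih =>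
    obtain ⟨q, r, hr⟩ := ih
    refine ⟨q - C (r.coeff 0 / u.coeff 0) * X ^ n, ?_⟩
    have hh : u * (q - C (r.coeff 0 / u.coeff 0) * X ^ n) - 1
        = X ^ n * (r - u * C (r.coeff 0 / u.coeff 0)) := by
      rw [mul_sub, sub_right_comm, hr]; ring
    rw [hh, pow_succ]
    refine mul_dvd_mul_left _ ?_
    rw [X_dvd_iff]
    have h2 : u.coeff 0 * (r.coeff 0 / u.coeff 0) = r.coeff 0 := by field_simp
    simp [coeff_sub, coeff_mul_C, mul_comm, h2]

private lemma aux_deriv_dvd {K : Type*} [Field K] {j : ℕ} {p : Polynomial K} (h : X ^ j ∣ p) :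
    (X : Polynomial K) ^ (j - 1) ∣ derivative p := by
  cases j with
  | zero => simpa using one_dvd _
  | succ n =>
    obtain ⟨t, rfl⟩ := h
    rw [derivative_mul, derivative_X_pow]
    simp only [Nat.succ_sub_one]
    exact dvd_add (dvd_mul_of_dvd_left (dvd_mul_left _ _) _)
      (dvd_mul_of_dvd_left (pow_dvd_pow X n.le_succ) _)

private lemma fam2_mem {K : Type*} [Field K] (m ν₁ ν₂ : ℕ) (p₁ : Polynomial K)
    (hord : X ^ ν₁ ∣ p₁) (V₂ : Submodule K (Polynomial K)) (hV₂ : ∀ q ∈ V₂, X ^ ν₂ ∣ q)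
    (hν : ν₁ < ν₂) (a : ℕ) (ha1 : 1 ≤ a) (ham : a < m) (haν : m ≤ a + ν₁) :
    ((X : Polynomial K) ^ a, 0) ∈
      Wsub K m (Submodule.span K {p₁} ⊔ V₂ ⊔ Bsub K m) := by
  set V := Submodule.span K {p₁} ⊔ V₂ ⊔ Bsub K m with hVdef
  have hBle : Bsub K m ≤ V := le_sup_right
  rw [mem_Wsub]
  refine ⟨by rw [coeff_X_pow, if_neg (by omega)], by simp, ?_, by simp, ?_⟩
  · rw [degree_X_pow]
    exact_mod_cast (by omega : a ≤ m - 1)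
  · intro v hv
    rw [hVdef, Submodule.mem_sup] at hv
    obtain ⟨y, hy, w, hw, rfl⟩ := hv
    rw [Submodule.mem_sup] at hy
    obtain ⟨x, hx, v₂, hv₂, rfl⟩ := hy
    rw [Submodule.mem_span_singleton] at hx
    obtain ⟨d, rfl⟩ := hx
    simp only [zero_mul, add_zero]
    refine hBle (mem_Bsub.mpr ?_)
    have h1 : (X : Polynomial K) ^ m ∣ X ^ a * (d • p₁) := by
      have : (X : Polynomial K) ^ (a + ν₁) ∣ X ^ a * (d • p₁) := by
        rw [pow_add, Polynomial.smul_eq_C_mul]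
        exact mul_dvd_mul_left _ (hord.mul_left _)
      exact (pow_dvd_pow X haν).trans this
    have h2 : (X : Polynomial K) ^ m ∣ X ^ a * v₂ := by
      have : (X : Polynomial K) ^ (a + ν₂) ∣ X ^ a * v₂ := by
        rw [pow_add]; exact mul_dvd_mul_left _ (hV₂ v₂ hv₂)
      exact (pow_dvd_pow X (by omega)).trans this
    have h3 : (X : Polynomial K) ^ m ∣ X ^ a * w := (mem_Bsub.mp hw).mul_left _
    rw [mul_add, mul_add]
    exact dvd_add (dvd_add h1 h2) h3

private lemma fam1_mem {K : Type*} [Field K] (m ν₁ ν₂ : ℕ) (hν : ν₁ < ν₂)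
    (u : Polynomial K) (hu0 : u.coeff 0 ≠ 0)
    (V₂ : Submodule K (Polynomial K)) (hV₂ : ∀ q ∈ V₂, X ^ ν₂ ∣ q)
    (b : ℕ) (hb1 : 1 ≤ b) (hbν : ν₁ ≤ b) (hbν₂ : m + 1 ≤ b + ν₂) (hbm : b < m) :
    ∃ A : Polynomial K, (A, (X : Polynomial K) ^ b) ∈
      Wsub K m (Submodule.span K {X ^ ν₁ * u} ⊔ V₂ ⊔ Bsub K m) := by
  classical
  set p₁ : Polynomial K := X ^ ν₁ * u with hp₁
  set V := Submodule.span K {p₁} ⊔ V₂ ⊔ Bsub K m with hVdef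
  have hspan : Submodule.span K {p₁} ≤ V := le_sup_of_le_left le_sup_left
  have hBle : Bsub K m ≤ V := le_sup_right
  obtain ⟨q, s₀, hq⟩ := aux_inv u hu0 m
  set g : Polynomial K := C (ν₁ : K) * X ^ (b - 1) * u + X ^ b * derivative u with hg
  set c : K := (g * q).coeff 0 with hc
  set N : ℕ := m - ν₁ with hN
  have hN1 : 1 ≤ N := by omega
  set A : Polynomial K := (C c - g * q) %ₘ (X ^ N) with hA
  set s : Polynomial K := (C c - g * q) /ₘ (X ^ N) with hs
  have key : A = C c - g * q - X ^ N * s := by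
    have h := Polynomial.modByMonic_add_div (C c - g * q) (X ^ N)
    rw [← h]; ring
  have hgb : (X : Polynomial K) ^ (b - 1) ∣ g := by
    refine dvd_add (dvd_mul_of_dvd_left (dvd_mul_left _ _) _) ?_
    exact dvd_mul_of_dvd_left (pow_dvd_pow X (by omega)) _
  have hXNs0 : ((X : Polynomial K) ^ N * s).coeff 0 = 0 := by
    rw [← X_dvd_iff]
    exact dvd_mul_of_dvd_left (dvd_pow_self X (by omega)) _
  have hA0 : A.coeff 0 = 0 := by
    rw [key]
    simp [coeff_sub, hXNs0, ← hc]
  have hdegA : A.degree < (N : WithBot ℕ) := by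
    have h := Polynomial.degree_modByMonic_lt (C c - g * q) (monic_X_pow (n := N))
    rwa [degree_X_pow] at h
  have hdegA' : A.degree ≤ ((m - 1 : ℕ) : WithBot ℕ) := by
    rcases eq_or_ne A 0 with h0 | h0
    · simp [h0]
    · rw [degree_eq_natDegree h0] at hdegA ⊢
      have h1 : A.natDegree < N := by exact_mod_cast hdegA
      exact_mod_cast (by omega : A.natDegree ≤ m - 1)
  -- key congruence
  have hder : (X : Polynomial K) ^ b * derivative p₁ = X ^ ν₁ * g := by
    obtain ⟨b', rfl⟩ : ∃ b', b = b' + 1 := ⟨b - 1, by omega⟩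
    cases ν₁ with
    | zero => simp [hp₁, hg]
    | succ ν =>
      simp only [hp₁, hg, derivative_mul, derivative_X_pow, Nat.succ_sub_one,
        Nat.add_sub_cancel]
      push_cast
      ring
  have hE : A * p₁ + X ^ b * derivative p₁ - C c * p₁
      = X ^ ν₁ * (g * (1 - u * q) - X ^ N * (s * u)) := by
    rw [hder, key, hp₁]; ring
  have hdvdE : (X : Polynomial K) ^ m ∣ X ^ ν₁ * (g * (1 - u * q) - X ^ N * (s * u)) := by
    have h1 : (X : Polynomial K) ^ N ∣ g * (1 - u * q) := by
      have hXm : (X : Polynomial K) ^ m ∣ (u * q - 1) := ⟨s₀, hq⟩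
      have : (X : Polynomial K) ^ N ∣ (u * q - 1) := (pow_dvd_pow X (by omega)).trans hXm
      have h' : (X : Polynomial K) ^ N ∣ -(u * q - 1) := this.neg_right
      simpa [neg_sub] using h'.mul_left g
    have h2 : (X : Polynomial K) ^ N ∣ X ^ N * (s * u) := dvd_mul_right _ _
    have h3 : (X : Polynomial K) ^ N ∣ (g * (1 - u * q) - X ^ N * (s * u)) := dvd_sub h1 h2
    have hpow : (X : Polynomial K) ^ m = X ^ ν₁ * X ^ N := by
      rw [← pow_add]; congr 1; omega
    rw [hpow]
    exact mul_dvd_mul_left _ h3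
  have hP1 : A * p₁ + X ^ b * derivative p₁ ∈ V := by
    have heq : A * p₁ + X ^ b * derivative p₁
        = C c * p₁ + (X ^ ν₁ * (g * (1 - u * q) - X ^ N * (s * u))) := by
      rw [← hE]; ring
    rw [heq]
    refine V.add_mem ?_ (hBle (mem_Bsub.mpr hdvdE))
    rw [← Polynomial.smul_eq_C_mul]
    exact hspan (Submodule.smul_mem _ _ (Submodule.mem_span_singleton_self _))
  have hAv₂ : ∀ v₂ ∈ V₂, (X : Polynomial K) ^ m ∣ A * v₂ := by
    intro v₂ hv₂
    rcases le_or_gt m ν₂ with hcase | hcase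
    · exact ((pow_dvd_pow X hcase).trans (hV₂ v₂ hv₂)).mul_left A
    · have hb2 : 2 ≤ b := by omega
      have hg0 : g.coeff 0 = 0 := by
        rw [← X_dvd_iff]
        exact (dvd_pow_self X (by omega : b - 1 ≠ 0)).trans hgb
      have hc0 : c = 0 := by
        rw [hc, Polynomial.mul_coeff_zero, hg0, zero_mul]
      have hdA : (X : Polynomial K) ^ (m - ν₂) ∣ A := by
        rw [key, hc0, map_zero, zero_sub]
        refine dvd_sub (Dvd.dvd.neg_right ?_) ?_
        · exact (((pow_dvd_pow X (show m - ν₂ ≤ b - 1 by omega)).trans hgb).mul_right q)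
        · exact (pow_dvd_pow X (show m - ν₂ ≤ N by omega)).trans (dvd_mul_right _ s)
      have hpow : (X : Polynomial K) ^ m = X ^ (m - ν₂) * X ^ ν₂ := by
        rw [← pow_add]; congr 1; omega
      rw [hpow]
      exact mul_dvd_mul hdA (hV₂ v₂ hv₂)
  refine ⟨A, mem_Wsub.mpr ⟨hA0, by rw [coeff_X_pow, if_neg (by omega)], hdegA', ?_, ?_⟩⟩
  · rw [degree_X_pow]
    exact_mod_cast (by omega : b ≤ m - 1)
  · intro v hv
    rw [hVdef, Submodule.mem_sup] at hv
    obtain ⟨y, hy, w, hw, rfl⟩ := hv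
    rw [Submodule.mem_sup] at hy
    obtain ⟨x, hx, v₂, hv₂, rfl⟩ := hy
    rw [Submodule.mem_span_singleton] at hx
    obtain ⟨d, rfl⟩ := hx
    have expand : A * (d • p₁ + v₂ + w) + X ^ b * derivative (d • p₁ + v₂ + w)
        = d • (A * p₁ + X ^ b * derivative p₁) + (A * v₂ + X ^ b * derivative v₂)
          + (A * w + X ^ b * derivative w) := by
      simp only [derivative_add, derivative_smul]
      simp only [Polynomial.smul_eq_C_mul]
      ring
    rw [expand]
    refine V.add_mem (V.add_mem (V.smul_mem _ hP1) ?_) ?_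
    · refine hBle (mem_Bsub.mpr (dvd_add (hAv₂ v₂ hv₂) ?_))
      have hd : (X : Polynomial K) ^ (ν₂ - 1) ∣ derivative v₂ := aux_deriv_dvd (hV₂ v₂ hv₂)
      have hpow : (X : Polynomial K) ^ m ∣ X ^ (b + (ν₂ - 1)) := pow_dvd_pow X (by omega)
      exact hpow.trans (by rw [pow_add]; exact mul_dvd_mul_left _ hd)
    · refine hBle (mem_Bsub.mpr (dvd_add ((mem_Bsub.mp hw).mul_left A) ?_))
      have hd : (X : Polynomial K) ^ (m - 1) ∣ derivative w := aux_deriv_dvd (mem_Bsub.mp hw)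
      have hpow : (X : Polynomial K) ^ m ∣ X ^ (b + (m - 1)) := pow_dvd_pow X (by omega)
      exact hpow.trans (by rw [pow_add]; exact mul_dvd_mul_left _ hd)

private lemma fd_aux {K : Type*} [Field K] {m : ℕ} (S : Submodule K (Polynomial K × Polynomial K))
    (hS : ∀ P ∈ S, P.1 ∈ degreeLT K m ∧ P.2 ∈ degreeLT K m) : FiniteDimensional K ↥S := by
  have fd1 : FiniteDimensional K (degreeLT K m) :=
    LinearEquiv.finiteDimensional (degreeLTEquiv K m).symm
  let e1 : S →ₗ[K] Polynomial K := (LinearMap.fst K _ _).comp S.subtype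
  let e2 : S →ₗ[K] Polynomial K := (LinearMap.snd K _ _).comp S.subtype
  let f1 := LinearMap.codRestrict (degreeLT K m) e1 (fun x => (hS x.1 x.2).1)
  let f2 := LinearMap.codRestrict (degreeLT K m) e2 (fun x => (hS x.1 x.2).2)
  refine Module.Finite.of_injective (f1.prod f2) ?_
  intro x y h
  rw [Prod.ext_iff] at h
  apply Subtype.ext
  exact Prod.ext (congrArg Subtype.val h.1) (congrArg Subtype.val h.2)

private lemma sum_X_pow_eq_zero {K : Type*} [Field K] {s : Finset ℕ} {g : ℕ → K}
    (h : ∑ b ∈ s, g b • (X : Polynomial K) ^ b = 0) : ∀ b ∈ s, g b = 0 := by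
  intro b hb
  have h2 := congrArg (fun p => Polynomial.coeff p b) h
  simp only [Polynomial.finset_sum_coeff, Polynomial.coeff_smul, Polynomial.coeff_X_pow,
    Polynomial.coeff_zero, smul_eq_mul] at h2
  rwa [Finset.sum_eq_single b (fun c _ hne => by simp [Ne.symm hne]) (fun hbs => absurd hb hbs),
    if_pos rfl, mul_one] at h2


/-- lower bound for `dim W(V,m)` in terms of the two smallest orders
of elements of `V`; in particular, if `W(V,m) = 0` then `ν₁ = 0` and `ν₂ = 1`. -/
theorem stmt16 (m : ℕ) (hm : 2 ≤ m) (ν₁ ν₂ : ℕ) (hν : ν₁ < ν₂)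
    (p₁ : Polynomial k) (hp₁ : p₁ ≠ 0)
    (hord₁ : X ^ ν₁ ∣ p₁) (hord₁' : ¬ X ^ (ν₁ + 1) ∣ p₁)
    (V₂ : Submodule k (Polynomial k)) (hV₂ : ∀ q ∈ V₂, X ^ ν₂ ∣ q)
    (V : Submodule k (Polynomial k))
    (hVdef : V = Submodule.span k {p₁} ⊔ V₂ ⊔ Bsub k m) :
    2 * (m : ℤ) - max 1 (max (ν₁ : ℤ) ((m : ℤ) - ν₂ + 1)) - max 1 ((m : ℤ) - ν₁) ≤
      (Module.finrank k ↥(Wsub k m V) : ℤ) ∧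
    (Wsub k m V = ⊥ → ν₁ = 0 ∧ ν₂ = 1) := by
  classical
  subst hVdef
  obtain ⟨u, hu⟩ := hord₁
  have hu0 : u.coeff 0 ≠ 0 := by
    intro h0
    apply hord₁'
    obtain ⟨t, ht⟩ := X_dvd_iff.mpr h0
    exact ⟨t, by rw [hu, ht]; ring⟩
  subst hu
  set B₀ := max 1 (max ν₁ (m + 1 - ν₂)) with hB₀
  set A₀ := max 1 (m - ν₁) with hA₀def
  have hB1 : 1 ≤ B₀ := le_max_left _ _
  have hBν : ν₁ ≤ B₀ := le_max_of_le_right (le_max_left _ _)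
  have hBν₂ : m + 1 - ν₂ ≤ B₀ := le_max_of_le_right (le_max_right _ _)
  have hA1 : 1 ≤ A₀ := le_max_left _ _
  have hAν : m - ν₁ ≤ A₀ := le_max_right _ _
  have hfam1 : ∀ b ∈ Finset.Ico B₀ m, ∃ A, (A, (X : Polynomial k) ^ b) ∈
      Wsub k m (Submodule.span k {X ^ ν₁ * u} ⊔ V₂ ⊔ Bsub k m) := by
    intro b hb
    rw [Finset.mem_Ico] at hb
    exact fam1_mem m ν₁ ν₂ hν u hu0 V₂ hV₂ b (by omega) (by omega) (by omega) hb.2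
  have hfam2 : ∀ a ∈ Finset.Ico A₀ m, ((X : Polynomial k) ^ a, (0 : Polynomial k)) ∈
      Wsub k m (Submodule.span k {X ^ ν₁ * u} ⊔ V₂ ⊔ Bsub k m) := by
    intro a ha
    rw [Finset.mem_Ico] at ha
    exact fam2_mem m ν₁ ν₂ _ (dvd_mul_right _ _) V₂ hV₂ hν a (by omega) ha.2 (by omega)
  choose Af hAf using hfam1
  have hWfd : FiniteDimensional k
      ↥(Wsub k m (Submodule.span k {X ^ ν₁ * u} ⊔ V₂ ⊔ Bsub k m)) := by
    refine fd_aux (m := m) _ (fun P hP => ?_)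
    rw [mem_Wsub] at hP
    have hlt : ((m - 1 : ℕ) : WithBot ℕ) < ((m : ℕ) : WithBot ℕ) := by
      exact_mod_cast (by omega : m - 1 < m)
    exact ⟨mem_degreeLT.mpr (lt_of_le_of_lt hP.2.2.1 hlt),
      mem_degreeLT.mpr (lt_of_le_of_lt hP.2.2.2.1 hlt)⟩
  set f : (↥(Finset.Ico B₀ m) ⊕ ↥(Finset.Ico A₀ m)) →
      ↥(Wsub k m (Submodule.span k {X ^ ν₁ * u} ⊔ V₂ ⊔ Bsub k m)) :=
    fun i => Sum.rec (fun b => ⟨(Af b.1 b.2, X ^ (b.1 : ℕ)), hAf b.1 b.2⟩)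
      (fun a => ⟨(X ^ (a.1 : ℕ), 0), hfam2 a.1 a.2⟩) i with hf
  have hind : LinearIndependent k f := by
    rw [Fintype.linearIndependent_iff]
    intro g hg
    have hg0 : ∑ i, g i • ((f i : Polynomial k × Polynomial k)) = 0 := by
      have := congrArg Subtype.val hg
      simpa using this
    have hsnd : ∑ b : ↥(Finset.Ico B₀ m), g (Sum.inl b) • (X : Polynomial k) ^ (b.1 : ℕ) = 0 := by
      have h2 := congrArg Prod.snd hg0
      rw [Fintype.sum_sum_type] at h2
      simpa [hf, Prod.snd_sum] using h2
    have hinl : ∀ b : ↥(Finset.Ico B₀ m), g (Sum.inl b) = 0 := by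
      set G : ℕ → k := fun n =>
        if hn : n ∈ Finset.Ico B₀ m then g (Sum.inl ⟨n, hn⟩) else 0 with hG
      have hGb : ∀ b : ↥(Finset.Ico B₀ m), G b.1 = g (Sum.inl b) := by
        intro b
        rw [hG]
        simp only [dif_pos b.2]
      have hsum : ∑ n ∈ Finset.Ico B₀ m, G n • (X : Polynomial k) ^ n = 0 := by
        rw [← Finset.sum_coe_sort (Finset.Ico B₀ m) (fun n => G n • (X : Polynomial k) ^ n)]
        rw [← hsnd]
        exact Finset.sum_congr rfl (fun b _ => by rw [hGb b])
      intro b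
      rw [← hGb b]
      exact sum_X_pow_eq_zero hsum b.1 b.2
    have hfst : ∑ a : ↥(Finset.Ico A₀ m), g (Sum.inr a) • (X : Polynomial k) ^ (a.1 : ℕ) = 0 := by
      have h1 := congrArg Prod.fst hg0
      rw [Fintype.sum_sum_type] at h1
      simpa [hf, hinl, Prod.fst_sum] using h1
    have hinr : ∀ a : ↥(Finset.Ico A₀ m), g (Sum.inr a) = 0 := by
      set G : ℕ → k := fun n =>
        if hn : n ∈ Finset.Ico A₀ m then g (Sum.inr ⟨n, hn⟩) else 0 with hG
      have hGa : ∀ a : ↥(Finset.Ico A₀ m), G a.1 = g (Sum.inr a) := by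
        intro a
        rw [hG]
        simp only [dif_pos a.2]
      have hsum : ∑ n ∈ Finset.Ico A₀ m, G n • (X : Polynomial k) ^ n = 0 := by
        rw [← Finset.sum_coe_sort (Finset.Ico A₀ m) (fun n => G n • (X : Polynomial k) ^ n)]
        rw [← hfst]
        exact Finset.sum_congr rfl (fun a _ => by rw [hGa a])
      intro a
      rw [← hGa a]
      exact sum_X_pow_eq_zero hsum a.1 a.2
    intro i
    cases i with
    | inl b => exact hinl b
    | inr a => exact hinr a
  have hcard := hind.fintype_card_le_finrank
  rw [Fintype.card_sum, Fintype.card_coe, Fintype.card_coe, Nat.card_Ico, Nat.card_Ico] at hcard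
  constructor
  · omega
  · intro hbot
    have hν₁0 : ν₁ = 0 := by
      by_contra h0
      have hm2 := fam2_mem m ν₁ ν₂ (X ^ ν₁ * u) (dvd_mul_right _ _) V₂ hV₂ hν (m - 1)
        (by omega) (by omega) (by omega)
      rw [hbot, Submodule.mem_bot, Prod.mk_eq_zero] at hm2
      exact pow_ne_zero _ X_ne_zero hm2.1
    refine ⟨hν₁0, ?_⟩
    by_contra h2
    obtain ⟨A, hm1⟩ := fam1_mem m ν₁ ν₂ hν u hu0 V₂ hV₂ (m - 1)
      (by omega) (by omega) (by omega) (by omega)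
    rw [hbot, Submodule.mem_bot, Prod.mk_eq_zero] at hm1
    exact pow_ne_zero _ X_ne_zero hm1.2

end
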